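/- Fix integers M > 1, 1 ≤ A < M, and the canonical alphabet 𝒜̄ = {0,…,A−1}. Let G_n denote the Cantor function of the n-iterate Cantor set C_n(1, M, 𝒜̄) based in [0,1], defined by G_n(x) = |C_n ∩ [0, x]| / |C_n| for x ≥ 0 and G_n(x) = 0 for x ≤ 0. Then G_n is subadditive: G_n(x + y) ≤ G_n(x) + G_n(y) for all x, y ≥ 0. -/

import Mathlib

open MeasureTheory

/-- Discrete `n`-iterate Cantor set with base `M` and alphabet `S`. -/
def cantorD (M : ℕ) (S : Finset ℕ) (n : ℕ) : Set ℕ :=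
  {x | ∃ a : Fin n → ℕ, (∀ j, a j ∈ S) ∧ x = ∑ j, a j * M ^ (j : ℕ)}

/-- Continuous `n`-iterate Cantor set with base `M`, alphabet `S`, based in `[0, L]`. -/
def cantorC (M : ℕ) (S : Finset ℕ) (L : ℝ) (n : ℕ) : Set ℝ :=
  ⋃ x ∈ cantorD M S n, Set.Icc (L / M ^ n * x) (L / M ^ n * x + L / M ^ n)

/-- The Cantor function of the `n`-iterate with base `M` and alphabet `S` based in `[0,1]`,
normalized so that its total value is `1` (the measure of the `n`-iterate with alphabet of
size `A` is `(A/M)^n`). -/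
noncomputable def cantorFun (M A : ℕ) (S : Finset ℕ) (n : ℕ) (x : ℝ) : ℝ :=
  if x ≤ 0 then 0
  else (volume (cantorC M S 1 n ∩ Set.Icc 0 x)).toReal * ((M : ℝ) / A) ^ n

namespace Stmt18

open Finset

def Dfin (M A : ℕ) : ℕ → Finset ℕ
  | 0 => {0}
  | n+1 => ((Finset.range A) ×ˢ Dfin M A n).image (fun p => p.2 + p.1 * M^n)

lemma mem_Dfin_succ {M A n x : ℕ} :
    x ∈ Dfin M A (n+1) ↔ ∃ a < A, ∃ d ∈ Dfin M A n, x = d + a * M^n := by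
  simp only [Dfin, Finset.mem_image, Finset.mem_product, Finset.mem_range, Prod.exists]
  constructor
  · rintro ⟨a, d, ⟨ha, hd⟩, rfl⟩
    exact ⟨a, ha, d, hd, rfl⟩
  · rintro ⟨a, ha, d, hd, rfl⟩
    exact ⟨a, d, ⟨ha, hd⟩, rfl⟩

lemma Dfin_lt {M A : ℕ} (hAM : A ≤ M) : ∀ n, ∀ d ∈ Dfin M A n, d < M^n := by
  intro n
  induction n with
  | zero => intro d hd; simp [Dfin] at hd; simp [hd]
  | succ n ih =>
    intro x hx
    rw [mem_Dfin_succ] at hx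
    obtain ⟨a, ha, d, hd, rfl⟩ := hx
    have h1 : d < M^n := ih d hd
    have h2 : a + 1 ≤ M := by omega
    calc d + a * M^n < (a+1) * M^n := by nlinarith [Nat.one_le_two_pow (n := 0)]
    _ ≤ M * M^n := Nat.mul_le_mul_right _ h2
    _ = M^(n+1) := by ring

lemma Dfin_coe (M A : ℕ) : ∀ n, (↑(Dfin M A n) : Set ℕ) = cantorD M (Finset.range A) n := by
  intro n
  induction n with
  | zero =>
    ext x
    simp [Dfin, cantorD]
  | succ n ih =>
    ext x
    simp only [Finset.coe_insert, Set.mem_insert_iff, Finset.mem_coe, mem_Dfin_succ, cantorD,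
      Set.mem_setOf_eq]
    constructor
    · rintro ⟨a, ha, d, hd, rfl⟩
      have : (d : ℕ) ∈ cantorD M (Finset.range A) n := by rw [← ih]; exact hd
      obtain ⟨b, hb, rfl⟩ := this
      refine ⟨Fin.snoc b a, ?_, ?_⟩
      · intro j
        refine Fin.lastCases ?_ ?_ j
        · simpa [Fin.snoc] using ha
        · intro i; simpa [Fin.snoc_castSucc] using hb i
      · rw [Fin.sum_univ_castSucc]
        simp [Fin.snoc_castSucc, Fin.snoc]
    · rintro ⟨b, hb, rfl⟩
      refine ⟨b (Fin.last n), by simpa using hb (Fin.last n),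
        ∑ j : Fin n, b j.castSucc * M ^ (j : ℕ), ?_, ?_⟩
      · rw [← Finset.mem_coe, ih]
        exact ⟨fun j => b j.castSucc, fun j => hb _, rfl⟩
      · rw [Fin.sum_univ_castSucc]
        simp

lemma card_Dfin {M A : ℕ} (hAM : A ≤ M) : ∀ n, (Dfin M A n).card = A^n := by
  intro n
  induction n with
  | zero => simp [Dfin]
  | succ n ih =>
    rw [Dfin, Finset.card_image_of_injOn, Finset.card_product, Finset.card_range, ih, pow_succ]
    · ring
    · rintro ⟨a, d⟩ h ⟨a', d'⟩ h' he
      simp only [Finset.mem_coe, Finset.mem_product, Finset.mem_range] at h h'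
      have hd := Dfin_lt hAM n d h.2
      have hd' := Dfin_lt hAM n d' h'.2
      simp only at he
      have hpos : 0 < M^n := Nat.pow_pos (by omega)
      have ha : a = a' := by
        have h2 := congrArg (fun x => x / M^n) he
        simp only [Nat.add_mul_div_right _ _ hpos, Nat.div_eq_of_lt hd, Nat.div_eq_of_lt hd'] at h2
        omega
      subst ha
      have : d = d' := by omega
      simp [this]


def F (M A n k : ℕ) : ℕ := ((Dfin M A n).filter (fun d => d < k)).card

lemma F_mono {M A n : ℕ} {k l : ℕ} (h : k ≤ l) : F M A n k ≤ F M A n l := by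
  apply Finset.card_le_card
  intro d hd
  simp only [Finset.mem_filter] at hd ⊢
  exact ⟨hd.1, by omega⟩

lemma F_zero {M A n : ℕ} : F M A n 0 = 0 := by simp [F]

lemma F_le {M A : ℕ} (hAM : A ≤ M) (n k : ℕ) : F M A n k ≤ A^n := by
  rw [← card_Dfin hAM n]
  exact Finset.card_le_card (Finset.filter_subset _ _)

lemma F_top {M A : ℕ} (hAM : A ≤ M) {n k : ℕ} (h : M^n ≤ k) : F M A n k = A^n := by
  rw [← card_Dfin hAM n]
  unfold F
  congr 1
  apply Finset.filter_true_of_mem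
  intro d hd
  exact lt_of_lt_of_le (Dfin_lt hAM n d hd) h

lemma F_succ_sum {M A : ℕ} (hAM : A ≤ M) {n k : ℕ} :
    F M A (n+1) k = ∑ a ∈ Finset.range A, F M A n (k - a * M^n) := by
  classical
  have hsplit : (Dfin M A (n+1)).filter (fun d => d < k) =
      (Finset.range A).biUnion
        (fun a => ((Dfin M A n).filter (fun d => d < k - a * M^n)).image (· + a * M^n)) := by
    ext x
    simp only [Finset.mem_filter, mem_Dfin_succ, Finset.mem_biUnion, Finset.mem_range,
      Finset.mem_image]
    constructor
    · rintro ⟨⟨a, ha, d, hd, rfl⟩, hlt⟩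
      exact ⟨a, ha, d, ⟨hd, by omega⟩, rfl⟩
    · rintro ⟨a, ha, d, ⟨hd, hlt⟩, rfl⟩
      exact ⟨⟨a, ha, d, hd, rfl⟩, by omega⟩
  rw [F, hsplit, Finset.card_biUnion]
  · apply Finset.sum_congr rfl
    intro a _
    rw [Finset.card_image_of_injective _ (add_left_injective _)]
    rfl
  · intro a ha b hb hab
    simp only [Finset.disjoint_left, Finset.mem_image, Finset.mem_filter]
    rintro x ⟨d, ⟨hd, -⟩, rfl⟩ ⟨d', ⟨hd', -⟩, he⟩
    have h1 := Dfin_lt hAM n d hd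
    have h2 := Dfin_lt hAM n d' hd'
    rcases Nat.lt_or_ge a b with h | h
    · have : d + a * M^n < d' + b * M^n := by
        calc d + a * M^n < (a+1) * M^n := by nlinarith
        _ ≤ b * M^n := Nat.mul_le_mul_right _ (by omega)
        _ ≤ d' + b * M^n := Nat.le_add_left _ _
      omega
    · have hab2 : b < a := by omega
      have : d' + b * M^n < d + a * M^n := by
        calc d' + b * M^n < (b+1) * M^n := by nlinarith
        _ ≤ a * M^n := Nat.mul_le_mul_right _ (by omega)
        _ ≤ d + a * M^n := Nat.le_add_left _ _
      omega

lemma Frec {M A : ℕ} (hAM : A ≤ M) (hM : 0 < M) {n q r : ℕ} (hr : r < M^n) :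
    F M A (n+1) (q * M^n + r) = min q A * A^n + (if q < A then F M A n r else 0) := by
  have hpos : 0 < M^n := Nat.pow_pos hM
  rw [F_succ_sum hAM]
  have hterm : ∀ a ∈ Finset.range A, F M A n (q * M^n + r - a * M^n) =
      (if a < q then A^n else 0) + (if a = q then F M A n r else 0) := by
    intro a _
    rcases lt_trichotomy a q with h | h | h
    · have h1 : M^n ≤ q * M^n + r - a * M^n := by
        have : (a+1) * M^n ≤ q * M^n := Nat.mul_le_mul_right _ (by omega)
        have h3 : a * M^n + M^n ≤ q * M^n := by linarith [this]
        omega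
      rw [if_pos h, if_neg (by omega : ¬ a = q), F_top hAM h1, add_zero]
    · subst h
      have h1 : a * M^n + r - a * M^n = r := by omega
      rw [h1, if_neg (lt_irrefl a), if_pos rfl, zero_add]
    · have h1 : q * M^n + r - a * M^n = 0 := by
        have : (q+1) * M^n ≤ a * M^n := Nat.mul_le_mul_right _ (by omega)
        have h3 : q * M^n + M^n ≤ a * M^n := by linarith [this]
        omega
      rw [h1, if_neg (by omega : ¬ a < q), if_neg (by omega : ¬ a = q), F_zero, add_zero]
  rw [Finset.sum_congr rfl hterm, Finset.sum_add_distrib]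
  congr 1
  · rw [← Finset.sum_filter, Finset.sum_const, smul_eq_mul]
    have : (Finset.range A).filter (fun x => x < q) = Finset.range (min q A) := by
      ext d
      simp only [Finset.mem_filter, Finset.mem_range]
      omega
    rw [this, Finset.card_range]
  · rw [Finset.sum_ite_eq' (Finset.range A) q]
    simp [Finset.mem_range]


lemma aux_le {M A : ℕ} (hAM : A ≤ M) (n c v : ℕ) :
    min c A * A^n + (if c < A then F M A n v else 0) ≤ A * A^n := by
  rcases lt_or_ge c A with h | h
  · rw [min_eq_left h.le, if_pos h]
    have h1 := F_le hAM n v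
    have h2 : (c+1) * A^n ≤ A * A^n := Nat.mul_le_mul_right _ (by omega)
    have h3 : (c+1) * A^n = c * A^n + A^n := by ring
    linarith
  · rw [min_eq_right h, if_neg (by omega)]
    simp

lemma F0_eval {M A k : ℕ} : F M A 0 k = if 0 < k then 1 else 0 := by
  simp only [F, Dfin, Finset.filter_singleton]
  split_ifs with h1 h2 h3 <;> simp_all <;> omega

lemma PQ {M A : ℕ} (hA1 : 1 ≤ A) (hAM : A < M) : ∀ n : ℕ,
    (∀ k l, F M A n (k + l) ≤ F M A n k + F M A n l) ∧
    (∀ k l w, k < M^n → l < M^n → k + l = M^n + w →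
      A^n + F M A n w ≤ F M A n k + F M A n l) := by
  have hAM' : A ≤ M := hAM.le
  have hM0 : 0 < M := by omega
  intro n
  induction n with
  | zero =>
    constructor
    · intro k l
      rw [F0_eval, F0_eval, F0_eval]
      split_ifs <;> omega
    · intro k l w hk hl he
      simp only [pow_zero] at hk hl he
      omega
  | succ n ih =>
    obtain ⟨Pn, Qn⟩ := ih
    have hMn : 0 < M^n := Nat.pow_pos hM0
    have hFle : ∀ v, F M A n v ≤ A^n := F_le hAM' n
    constructor
    · -- P
      intro k l
      obtain ⟨q, r, hr, hk⟩ : ∃ q r, r < M^n ∧ k = q * M^n + r :=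
        ⟨k / M^n, k % M^n, Nat.mod_lt _ hMn, by rw [mul_comm]; exact (Nat.div_add_mod k (M^n)).symm⟩
      obtain ⟨p, u, hu, hl⟩ : ∃ p u, u < M^n ∧ l = p * M^n + u :=
        ⟨l / M^n, l % M^n, Nat.mod_lt _ hMn, by rw [mul_comm]; exact (Nat.div_add_mod l (M^n)).symm⟩
      subst hk hl
      by_cases hc : r + u < M^n
      · have e : (q*M^n + r) + (p*M^n + u) = (q+p) * M^n + (r+u) := by ring
        rw [e, Frec hAM' hM0 hc, Frec hAM' hM0 hr, Frec hAM' hM0 hu]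
        have hP := Pn r u
        rcases le_or_gt A q with hq | hq
        · rw [min_eq_right hq, min_eq_right (show A ≤ q + p by omega),
            if_neg (show ¬ (q + p < A) by omega), if_neg (show ¬ (q < A) by omega)]
          simp only [add_zero]
          exact Nat.le_add_right _ _
        · rcases le_or_gt A p with hp | hp
          · rw [min_eq_right (show A ≤ q + p by omega), min_eq_left hq.le, min_eq_right hp,
              if_neg (show ¬ (q + p < A) by omega), if_pos hq, if_neg (show ¬ (p < A) by omega)]
            simp only [add_zero]
            exact Nat.le_add_left _ _
          · rw [min_eq_left hq.le, min_eq_left hp.le, if_pos hq, if_pos hp]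
            rcases lt_or_ge (q+p) A with hqp | hqp
            · rw [min_eq_left hqp.le, if_pos hqp]
              have h4 : (q+p) * A^n = q * A^n + p * A^n := by ring
              linarith
            · rw [min_eq_right hqp, if_neg (show ¬ (q + p < A) by omega)]
              have h3 : A * A^n ≤ (q+p) * A^n := Nat.mul_le_mul_right _ hqp
              have h4 : (q+p) * A^n = q * A^n + p * A^n := by ring
              linarith
      · obtain ⟨w, hweq⟩ : ∃ w, r + u = M^n + w := ⟨r + u - M^n, by omega⟩
        have hwlt : w < M^n := by omega
        have e : (q*M^n + r) + (p*M^n + u) = (q+p+1) * M^n + w := by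
          have e1 : (q*M^n + r) + (p*M^n + u) = (q+p)*M^n + (r+u) := by ring
          rw [e1, hweq]; ring
        rw [e, Frec hAM' hM0 hwlt, Frec hAM' hM0 hr, Frec hAM' hM0 hu]
        have hQ := Qn r u w hr hu hweq
        rcases le_or_gt A q with hq | hq
        · rw [min_eq_right hq, min_eq_right (show A ≤ q + p + 1 by omega),
            if_neg (show ¬ (q + p + 1 < A) by omega), if_neg (show ¬ (q < A) by omega)]
          simp only [add_zero]
          exact Nat.le_add_right _ _
        · rcases le_or_gt A p with hp | hp
          · rw [min_eq_right (show A ≤ q + p + 1 by omega), min_eq_left hq.le, min_eq_right hp,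
              if_neg (show ¬ (q + p + 1 < A) by omega), if_pos hq,
              if_neg (show ¬ (p < A) by omega)]
            simp only [add_zero]
            exact Nat.le_add_left _ _
          · rw [min_eq_left hq.le, min_eq_left hp.le, if_pos hq, if_pos hp]
            rcases lt_or_ge (q+p+1) A with h2 | h2
            · rw [min_eq_left h2.le, if_pos h2]
              have h4 : (q+p+1) * A^n = q * A^n + p * A^n + A^n := by ring
              linarith
            · rw [min_eq_right h2, if_neg (show ¬ (q + p + 1 < A) by omega)]
              have h3 : A * A^n ≤ (q+p+1) * A^n := Nat.mul_le_mul_right _ h2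
              have h4 : (q+p+1) * A^n = q * A^n + p * A^n + A^n := by ring
              linarith
    · -- Q
      intro k l w hk hl he
      obtain ⟨q, r, hr, hkd⟩ : ∃ q r, r < M^n ∧ k = q * M^n + r :=
        ⟨k / M^n, k % M^n, Nat.mod_lt _ hMn, by rw [mul_comm]; exact (Nat.div_add_mod k (M^n)).symm⟩
      obtain ⟨p, u, hu, hld⟩ : ∃ p u, u < M^n ∧ l = p * M^n + u :=
        ⟨l / M^n, l % M^n, Nat.mod_lt _ hMn, by rw [mul_comm]; exact (Nat.div_add_mod l (M^n)).symm⟩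
      have hMs : M^(n+1) = M * M^n := by rw [pow_succ, mul_comm]
      have hAs : A^(n+1) = A * A^n := by rw [pow_succ, mul_comm]
      have hqM : q < M := by
        by_contra h
        push_neg at h
        have : M * M^n ≤ q * M^n := Nat.mul_le_mul_right _ h
        rw [← hMs] at this
        omega
      have hpM : p < M := by
        by_contra h
        push_neg at h
        have : M * M^n ≤ p * M^n := Nat.mul_le_mul_right _ h
        rw [← hMs] at this
        omega
      subst hkd hld
      rw [hAs, Frec hAM' hM0 hr, Frec hAM' hM0 hu]
      by_cases hc : r + u < M^n
      · -- no carry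
        have hqp : M ≤ q + p := by
          by_contra h
          push_neg at h
          have h1 : (q+p+1) * M^n ≤ M * M^n := Nat.mul_le_mul_right _ (by omega)
          have h2 : (q*M^n + r) + (p*M^n + u) < (q+p+1) * M^n := by
            have e3 : (q*M^n + r) + (p*M^n + u) = (q+p)*M^n + (r+u) := by ring
            have e4 : (q+p+1) * M^n = (q+p)*M^n + M^n := by ring
            omega
          omega
        obtain ⟨c, hcq⟩ : ∃ c, q + p = M + c := ⟨q + p - M, by omega⟩
        have hwe : w = c * M^n + (r + u) := by
          have e2 : (q*M^n + r) + (p*M^n + u) = M * M^n + (c*M^n + (r+u)) := by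
            calc (q*M^n + r) + (p*M^n + u) = (q+p)*M^n + (r+u) := by ring
            _ = (M+c)*M^n + (r+u) := by rw [← hcq]
            _ = M * M^n + (c*M^n + (r+u)) := by ring
          omega
        rw [hwe, Frec hAM' hM0 hc]
        rcases le_or_gt A q with hq | hq <;> rcases le_or_gt A p with hp | hp
        · rw [min_eq_right hq, min_eq_right hp, if_neg (show ¬ (q < A) by omega),
            if_neg (show ¬ (p < A) by omega)]
          have := aux_le hAM' n c (r+u)
          linarith
        · -- A ≤ q, p < A : c < p
          have hcp : c + 1 ≤ p := by omega
          rw [min_eq_right hq, if_neg (show ¬ (q < A) by omega), min_eq_left hp.le, if_pos hp,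
            min_eq_left (show c ≤ A by omega), if_pos (show c < A by omega)]
          have h1 := hFle (r+u)
          have h2 : (c+1) * A^n ≤ p * A^n := Nat.mul_le_mul_right _ hcp
          have h3 : (c+1) * A^n = c * A^n + A^n := by ring
          linarith
        · -- q < A ≤ p : c < q
          have hcp : c + 1 ≤ q := by omega
          rw [min_eq_left hq.le, if_pos hq, min_eq_right hp, if_neg (show ¬ (p < A) by omega),
            min_eq_left (show c ≤ A by omega), if_pos (show c < A by omega)]
          have h1 := hFle (r+u)
          have h2 : (c+1) * A^n ≤ q * A^n := Nat.mul_le_mul_right _ hcp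
          have h3 : (c+1) * A^n = c * A^n + A^n := by ring
          linarith
        · -- q < A, p < A
          have hcA : c < A := by omega
          have hac : A + c ≤ q + p := by omega
          rw [min_eq_left hq.le, if_pos hq, min_eq_left hp.le, if_pos hp,
            min_eq_left hcA.le, if_pos hcA]
          have hP := Pn r u
          have h2 : (A+c) * A^n ≤ (q+p) * A^n := Nat.mul_le_mul_right _ hac
          have h3 : (A+c) * A^n = A * A^n + c * A^n := by ring
          have h4 : (q+p) * A^n = q * A^n + p * A^n := by ring
          linarith
      · -- carry
        obtain ⟨w2, hweq⟩ : ∃ w2, r + u = M^n + w2 := ⟨r + u - M^n, by omega⟩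
        have hw2lt : w2 < M^n := by omega
        have hQ := Qn r u w2 hr hu hweq
        have hqp : M ≤ q + p + 1 := by
          by_contra h
          push_neg at h
          have h1 : (q+p+2) * M^n ≤ M * M^n := Nat.mul_le_mul_right _ (by omega)
          have h2 : (q*M^n + r) + (p*M^n + u) < (q+p+2) * M^n := by
            have e3 : (q*M^n + r) + (p*M^n + u) = (q+p)*M^n + (r+u) := by ring
            have e4 : (q+p+2) * M^n = (q+p)*M^n + M^n + M^n := by ring
            omega
          omega
        obtain ⟨c, hcq⟩ : ∃ c, q + p + 1 = M + c := ⟨q + p + 1 - M, by omega⟩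
        have hwe : w = c * M^n + w2 := by
          have e2 : (q*M^n + r) + (p*M^n + u) = M * M^n + (c*M^n + w2) := by
            calc (q*M^n + r) + (p*M^n + u) = (q+p)*M^n + (r+u) := by ring
            _ = (q+p)*M^n + (M^n + w2) := by rw [← hweq]
            _ = (q+p+1)*M^n + w2 := by ring
            _ = (M+c)*M^n + w2 := by rw [← hcq]
            _ = M * M^n + (c*M^n + w2) := by ring
          omega
        rw [hwe, Frec hAM' hM0 hw2lt]
        rcases le_or_gt A q with hq | hq <;> rcases le_or_gt A p with hp | hp
        · rw [min_eq_right hq, min_eq_right hp, if_neg (show ¬ (q < A) by omega),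
            if_neg (show ¬ (p < A) by omega)]
          have := aux_le hAM' n c w2
          linarith
        · -- A ≤ q, p < A : c ≤ p, F w2 ≤ F u
          have hcp : c ≤ p := by omega
          have hfr := hFle r
          rw [min_eq_right hq, if_neg (show ¬ (q < A) by omega), min_eq_left hp.le, if_pos hp,
            min_eq_left (show c ≤ A by omega), if_pos (show c < A by omega)]
          have h2 : c * A^n ≤ p * A^n := Nat.mul_le_mul_right _ hcp
          linarith
        · -- q < A ≤ p : c ≤ q, F w2 ≤ F r
          have hcp : c ≤ q := by omega
          have hfu := hFle u
          rw [min_eq_left hq.le, if_pos hq, min_eq_right hp, if_neg (show ¬ (p < A) by omega),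
            min_eq_left (show c ≤ A by omega), if_pos (show c < A by omega)]
          have h2 : c * A^n ≤ q * A^n := Nat.mul_le_mul_right _ hcp
          linarith
        · -- q < A, p < A
          have hcA : c < A := by omega
          have hac : A + c ≤ q + p := by omega
          rw [min_eq_left hq.le, if_pos hq, min_eq_left hp.le, if_pos hp,
            min_eq_left hcA.le, if_pos hcA]
          have h2 : (A+c) * A^n ≤ (q+p) * A^n := Nat.mul_le_mul_right _ hac
          have h3 : (A+c) * A^n = A * A^n + c * A^n := by ring
          have h4 : (q+p) * A^n = q * A^n + p * A^n := by ring
          linarith [Nat.zero_le (A^n)]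


noncomputable def Phi (M A n : ℕ) (t : ℝ) : ℝ :=
  ∑ d ∈ Dfin M A n, min 1 (max 0 (t - (d:ℝ)))

lemma Phi_nonneg (M A n : ℕ) (t : ℝ) : 0 ≤ Phi M A n t :=
  Finset.sum_nonneg fun d _ => le_min zero_le_one (le_max_left _ _)

lemma Phi_zero (M A n : ℕ) : Phi M A n 0 = 0 := by
  apply Finset.sum_eq_zero
  intro d _
  have h1 : (0:ℝ) - (d:ℝ) ≤ 0 := by
    have : (0:ℝ) ≤ (d:ℝ) := Nat.cast_nonneg d
    linarith
  rw [max_eq_left h1, min_eq_right zero_le_one]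

lemma F_succ_nat {M A n a : ℕ} :
    F M A n (a+1) = F M A n a + (if a ∈ Dfin M A n then 1 else 0) := by
  classical
  have hsplit : (Dfin M A n).filter (fun d => d < a + 1) =
      (Dfin M A n).filter (fun d => d < a) ∪ (Dfin M A n).filter (fun d => d = a) := by
    ext d
    simp only [Finset.mem_filter, Finset.mem_union]
    by_cases hd : d ∈ Dfin M A n
    · simp only [hd, true_and]
      omega
    · simp [hd]
  have hdisj : Disjoint ((Dfin M A n).filter (fun d => d < a))
      ((Dfin M A n).filter (fun d => d = a)) := by
    simp only [Finset.disjoint_left, Finset.mem_filter]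
    rintro d ⟨-, h1⟩ ⟨-, rfl⟩
    omega
  rw [F, hsplit, Finset.card_union_of_disjoint hdisj, Finset.filter_eq']
  split_ifs <;> simp [F]

lemma Phi_eq (M A n : ℕ) {t : ℝ} (ht : 0 ≤ t) :
    Phi M A n t = (1 - (t - (⌊t⌋₊ : ℝ))) * F M A n ⌊t⌋₊
      + (t - (⌊t⌋₊ : ℝ)) * F M A n (⌊t⌋₊ + 1) := by
  classical
  set a := ⌊t⌋₊ with ha
  have haf : (a:ℝ) ≤ t := Nat.floor_le ht
  have haf1 : t < (a:ℝ) + 1 := Nat.lt_floor_add_one t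
  rw [Phi, ← Finset.sum_filter_add_sum_filter_not (Dfin M A n) (fun d => d < a)]
  have h1 : ∑ d ∈ (Dfin M A n).filter (fun d => d < a), min 1 (max 0 (t - (d:ℝ)))
      = (F M A n a : ℝ) := by
    rw [show (F M A n a : ℝ) = ∑ d ∈ (Dfin M A n).filter (fun d => d < a), (1:ℝ) by
      rw [Finset.sum_const, nsmul_eq_mul, mul_one]; rfl]
    apply Finset.sum_congr rfl
    intro d hd
    have hda : d < a := (Finset.mem_filter.1 hd).2
    have hdr : (d:ℝ) + 1 ≤ (a:ℝ) := by exact_mod_cast Nat.succ_le_of_lt hda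
    have : (1:ℝ) ≤ t - d := by linarith
    rw [max_eq_right (by linarith), min_eq_left this]
  have h2 : ∑ d ∈ (Dfin M A n).filter (fun d => ¬ d < a), min 1 (max 0 (t - (d:ℝ)))
      = (if a ∈ Dfin M A n then t - (a:ℝ) else 0) := by
    have hcongr : ∀ d ∈ (Dfin M A n).filter (fun d => ¬ d < a),
        min 1 (max 0 (t - (d:ℝ))) = (if d = a then t - (a:ℝ) else 0) := by
      intro d hd
      have hda : a ≤ d := by
        have := (Finset.mem_filter.1 hd).2
        omega
      by_cases hde : d = a
      · subst hde
        rw [if_pos rfl, max_eq_right (by linarith), min_eq_right (by linarith)]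
      · have hda1 : a + 1 ≤ d := by omega
        have : ((a:ℝ)) + 1 ≤ (d:ℝ) := by exact_mod_cast hda1
        rw [if_neg hde, max_eq_left (by linarith), min_eq_right (by linarith)]
    rw [Finset.sum_congr rfl hcongr, Finset.sum_ite_eq' _ a]
    simp only [Finset.mem_filter, lt_irrefl, not_false_iff, and_true]
  rw [h1, h2]
  have hsucc : (F M A n (a+1) : ℝ) = (F M A n a : ℝ) + (if a ∈ Dfin M A n then (1:ℝ) else 0) := by
    rw [F_succ_nat]
    push_cast
    split_ifs <;> simp
  rw [hsucc]
  split_ifs <;> ring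

lemma Phi_subadd {M A : ℕ} (hA1 : 1 ≤ A) (hAM : A < M) (n : ℕ) {t s : ℝ}
    (ht : 0 ≤ t) (hs : 0 ≤ s) :
    Phi M A n (t + s) ≤ Phi M A n t + Phi M A n s := by
  obtain ⟨hP, -⟩ := PQ hA1 hAM n
  set a := ⌊t⌋₊ with ha
  set b := ⌊s⌋₊ with hb
  have haf : (a:ℝ) ≤ t := Nat.floor_le ht
  have haf1 : t < (a:ℝ) + 1 := Nat.lt_floor_add_one t
  have hbf : (b:ℝ) ≤ s := Nat.floor_le hs
  have hbf1 : s < (b:ℝ) + 1 := Nat.lt_floor_add_one s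
  have c1 : (F M A n (a+b) : ℝ) ≤ F M A n a + F M A n b := by exact_mod_cast hP a b
  have c2 : (F M A n (a+b+1) : ℝ) ≤ F M A n (a+1) + F M A n b := by
    have := hP (a+1) b
    rw [show a+1+b = a+b+1 by omega] at this
    exact_mod_cast this
  have c3 : (F M A n (a+b+1) : ℝ) ≤ F M A n a + F M A n (b+1) := by
    have := hP a (b+1)
    rw [show a+(b+1) = a+b+1 by omega] at this
    exact_mod_cast this
  have c4 : (F M A n (a+b+2) : ℝ) ≤ F M A n (a+1) + F M A n (b+1) := by
    have := hP (a+1) (b+1)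
    rw [show a+1+(b+1) = a+b+2 by omega] at this
    exact_mod_cast this
  rw [Phi_eq M A n ht, Phi_eq M A n hs, Phi_eq M A n (by linarith : (0:ℝ) ≤ t + s), ← ha, ← hb]
  by_cases hab : t + s < (a:ℝ) + b + 1
  · have hfloor : ⌊t+s⌋₊ = a + b := by
      rw [Nat.floor_eq_iff (by linarith)]
      push_cast
      constructor <;> linarith
    rw [hfloor]
    have e1 : (0:ℝ) ≤ (1 - (t - a) - (s - b)) *
        (((F M A n a : ℝ) + F M A n b) - F M A n (a+b)) := by
      apply mul_nonneg _ (by linarith)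
      push_cast
      linarith
    have e2 : (0:ℝ) ≤ (t - a) * (((F M A n (a+1) : ℝ) + F M A n b) - F M A n (a+b+1)) :=
      mul_nonneg (by linarith) (by linarith)
    have e3 : (0:ℝ) ≤ (s - b) * (((F M A n a : ℝ) + F M A n (b+1)) - F M A n (a+b+1)) :=
      mul_nonneg (by linarith) (by linarith)
    push_cast at e1 ⊢
    nlinarith [e1, e2, e3]
  · have hfloor : ⌊t+s⌋₊ = a + b + 1 := by
      rw [Nat.floor_eq_iff (by linarith)]
      push_cast
      constructor <;> linarith
    rw [hfloor]
    have e1 : (0:ℝ) ≤ (1 - (t - a)) *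
        (((F M A n a : ℝ) + F M A n (b+1)) - F M A n (a+b+1)) :=
      mul_nonneg (by linarith) (by linarith)
    have e2 : (0:ℝ) ≤ (1 - (s - b)) *
        (((F M A n (a+1) : ℝ) + F M A n b) - F M A n (a+b+1)) :=
      mul_nonneg (by linarith) (by linarith)
    have e3 : (0:ℝ) ≤ ((t - a) + (s - b) - 1) *
        (((F M A n (a+1) : ℝ) + F M A n (b+1)) - F M A n (a+b+2)) := by
      apply mul_nonneg _ (by linarith)
      push_cast at hab
      linarith
    push_cast
    nlinarith [e1, e2, e3]


lemma ofReal_max0 (v : ℝ) : ENNReal.ofReal v = ENNReal.ofReal (max 0 v) := by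
  rcases le_total v 0 with h | h
  · rw [ENNReal.ofReal_eq_zero.2 h, max_eq_left h, ENNReal.ofReal_zero]
  · rw [max_eq_right h]

lemma vol_eq (M A : ℕ) (hM : 1 < M) (n : ℕ) {x : ℝ} (hx : 0 ≤ x) :
    volume (cantorC M (Finset.range A) 1 n ∩ Set.Icc 0 x)
      = ENNReal.ofReal ((1/(M:ℝ)^n) * Phi M A n ((M:ℝ)^n * x)) := by
  classical
  set c : ℝ := 1/(M:ℝ)^n with hcdef
  have hMn : (0:ℝ) < (M:ℝ)^n := by positivity
  have hc : 0 < c := by positivity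
  have hcM : c * (M:ℝ)^n = 1 := by
    rw [hcdef]
    field_simp
  -- rewrite cantorC as a finset biUnion
  have hC : cantorC M (Finset.range A) 1 n
      = ⋃ d ∈ Dfin M A n, Set.Icc (c * (d:ℕ)) (c * (d:ℕ) + c) := by
    rw [cantorC, ← Dfin_coe M A n]
    rfl
  set U : Set ℝ := ⋃ d ∈ Dfin M A n, Set.Ioc (c * (d:ℕ)) (c * (d:ℕ) + c) with hU
  set N : Set ℝ := ⋃ d ∈ Dfin M A n, {c * ((d:ℕ):ℝ)} with hN
  have hNnull : volume N = 0 := by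
    apply Set.Finite.measure_zero
    exact Set.Finite.biUnion (Finset.finite_toSet _) (fun _ _ => Set.finite_singleton _)
  have hsub1 : cantorC M (Finset.range A) 1 n ⊆ U ∪ N := by
    rw [hC]
    intro y hy
    simp only [Set.mem_iUnion, Set.mem_Icc, exists_prop] at hy
    obtain ⟨d, hd, h1, h2⟩ := hy
    rcases eq_or_lt_of_le h1 with h | h
    · right
      simp only [hN, Set.mem_iUnion, Set.mem_singleton_iff, exists_prop]
      exact ⟨d, hd, h.symm⟩
    · left
      simp only [hU, Set.mem_iUnion, Set.mem_Ioc, exists_prop]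
      exact ⟨d, hd, h, h2⟩
  have hsub2 : U ⊆ cantorC M (Finset.range A) 1 n := by
    rw [hC]
    intro y hy
    simp only [hU, Set.mem_iUnion, Set.mem_Ioc, exists_prop] at hy
    obtain ⟨d, hd, h1, h2⟩ := hy
    simp only [Set.mem_iUnion, Set.mem_Icc, exists_prop]
    exact ⟨d, hd, h1.le, h2⟩
  have hvol : volume (cantorC M (Finset.range A) 1 n ∩ Set.Icc 0 x)
      = volume (U ∩ Set.Icc 0 x) := by
    apply le_antisymm
    · calc volume (cantorC M (Finset.range A) 1 n ∩ Set.Icc 0 x)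
          ≤ volume ((U ∩ Set.Icc 0 x) ∪ N) := by
            apply measure_mono
            intro y ⟨h1, h2⟩
            rcases hsub1 h1 with h | h
            · exact Or.inl ⟨h, h2⟩
            · exact Or.inr h
      _ ≤ volume (U ∩ Set.Icc 0 x) + volume N := measure_union_le _ _
      _ = volume (U ∩ Set.Icc 0 x) := by rw [hNnull, add_zero]
    · exact measure_mono (Set.inter_subset_inter_left _ hsub2)
  rw [hvol]
  have hUI : U ∩ Set.Icc 0 x
      = ⋃ d ∈ Dfin M A n, (Set.Ioc (c * (d:ℕ)) (c * (d:ℕ) + c) ∩ Set.Icc 0 x) := by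
    rw [hU]
    ext y
    simp only [Set.mem_inter_iff, Set.mem_iUnion, exists_prop]
    tauto
  rw [hUI]
  rw [measure_biUnion_finset]
  · -- compute each term and sum
    have hterm : ∀ d ∈ Dfin M A n,
        volume (Set.Ioc (c * (d:ℕ)) (c * (d:ℕ) + c) ∩ Set.Icc 0 x)
          = ENNReal.ofReal (max 0 (min (c * (d:ℕ) + c) x - c * (d:ℕ))) := by
      intro d _
      have hd0 : (0:ℝ) ≤ c * (d:ℕ) := by positivity
      have hset : Set.Ioc (c * (d:ℕ)) (c * (d:ℕ) + c) ∩ Set.Icc 0 x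
          = Set.Ioc (c * (d:ℕ)) (min (c * (d:ℕ) + c) x) := by
        ext y
        simp only [Set.mem_inter_iff, Set.mem_Ioc, Set.mem_Icc, le_min_iff, min_def]
        constructor
        · rintro ⟨⟨h1, h2⟩, h3, h4⟩
          refine ⟨h1, ?_⟩
          split_ifs <;> linarith
        · rintro ⟨h1, h2⟩
          split_ifs at h2 <;> exact ⟨⟨h1, by linarith⟩, by linarith, by linarith⟩
      rw [hset, Real.volume_Ioc, ofReal_max0]
    rw [Finset.sum_congr rfl hterm, ← ENNReal.ofReal_sum_of_nonneg
      (fun d _ => le_max_left _ _)]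
    congr 1
    rw [Phi, Finset.mul_sum]
    apply Finset.sum_congr rfl
    intro d _
    have e1 : min (c * (d:ℕ) + c) x - c * (d:ℕ) = min c (x - c * (d:ℕ)) := by
      rw [← min_sub_sub_right]
      ring_nf
    have e2 : c * min 1 (max 0 ((M:ℝ)^n * x - (d:ℕ)))
        = min c (max 0 (x - c * (d:ℕ))) := by
      rw [mul_min_of_nonneg _ _ hc.le, mul_one, mul_max_of_nonneg _ _ hc.le, mul_zero]
      congr 2
      have : c * ((M:ℝ)^n * x) = x := by
        rw [← mul_assoc, hcM, one_mul]
      rw [mul_sub, this]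
    rw [e1, e2, max_min_distrib_left, max_eq_right hc.le]
  · -- pairwise disjoint
    intro d hd d' hd' hne
    have hdd : (d:ℕ) ≠ (d':ℕ) := hne
    apply Disjoint.mono (Set.inter_subset_left) (Set.inter_subset_left)
    rw [Set.disjoint_left]
    intro y hy hy'
    simp only [Set.mem_Ioc] at hy hy'
    rcases Nat.lt_or_ge d d' with h | h
    · have : (d:ℝ) + 1 ≤ (d':ℝ) := by exact_mod_cast Nat.succ_le_of_lt h
      have hle : c * (d:ℕ) + c ≤ c * (d':ℕ) := by nlinarith
      linarith [hy.2, hy'.1]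
    · have hlt : d' < d := by omega
      have : (d':ℝ) + 1 ≤ (d:ℝ) := by exact_mod_cast Nat.succ_le_of_lt hlt
      have hle : c * (d':ℕ) + c ≤ c * (d:ℕ) := by nlinarith
      linarith [hy.1, hy'.2]
  · intro d _
    exact measurableSet_Ioc.inter measurableSet_Icc

lemma cantorFun_eq (M A : ℕ) (hM : 1 < M) (n : ℕ) {x : ℝ} (hx : 0 ≤ x) :
    cantorFun M A (Finset.range A) n x
      = (1/(M:ℝ)^n) * Phi M A n ((M:ℝ)^n * x) * ((M:ℝ)/A)^n := by
  rcases eq_or_lt_of_le hx with h | h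
  · rw [cantorFun, if_pos (le_of_eq h.symm), ← h, mul_zero, Phi_zero]
    ring
  · rw [cantorFun, if_neg (by linarith), vol_eq M A hM n hx,
      ENNReal.toReal_ofReal (mul_nonneg (by positivity) (Phi_nonneg M A n _))]

end Stmt18

theorem stmt_18 (M A : ℕ) (hM : 1 < M) (hA1 : 1 ≤ A) (hAM : A < M) (n : ℕ)
    (x y : ℝ) (hx : 0 ≤ x) (hy : 0 ≤ y) :
    cantorFun M A (Finset.range A) n (x + y) ≤
      cantorFun M A (Finset.range A) n x + cantorFun M A (Finset.range A) n y := by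
  have hxy : 0 ≤ x + y := by linarith
  rw [Stmt18.cantorFun_eq M A hM n hx, Stmt18.cantorFun_eq M A hM n hy,
    Stmt18.cantorFun_eq M A hM n hxy, mul_add ((M:ℝ)^n)]
  have ht : 0 ≤ (M:ℝ)^n * x := by positivity
  have hs : 0 ≤ (M:ℝ)^n * y := by positivity
  have hsub := Stmt18.Phi_subadd hA1 hAM n ht hs
  calc (1/(M:ℝ)^n) * Stmt18.Phi M A n ((M:ℝ)^n * x + (M:ℝ)^n * y) * ((M:ℝ)/A)^n
      ≤ (1/(M:ℝ)^n) * (Stmt18.Phi M A n ((M:ℝ)^n * x) + Stmt18.Phi M A n ((M:ℝ)^n * y))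
        * ((M:ℝ)/A)^n := by
        apply mul_le_mul_of_nonneg_right _ (by positivity)
        apply mul_le_mul_of_nonneg_left hsub (by positivity)
    _ = (1/(M:ℝ)^n) * Stmt18.Phi M A n ((M:ℝ)^n * x) * ((M:ℝ)/A)^n
        + (1/(M:ℝ)^n) * Stmt18.Phi M A n ((M:ℝ)^n * y) * ((M:ℝ)/A)^n := by ring
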